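/- Let v_1, …, v_k be distinct points in ℝ^d whose convex hull S has nonempty interior and such that each v_i is an extreme point of S (so S is a convex polytope with exactly the k vertices v_1, …, v_k). Then for every Δ > 0 there exists δ > 0 such that for every choice of points w_1, …, w_k ∈ ℝ^d, if the convex hull T of {w_1, …, w_k} satisfies λ(T Δ S) ≤ δ, then there is a permutation ρ of {1,…,k} with ‖w_{ρ(i)} − v_i‖ ≤ Δ for all i. -/

import Mathlib

open MeasureTheory Metric Set Pointwise

private lemma small_inv_aux (c : ℝ) (hc : 0 < c) : ∃ N : ℕ, ∀ n ≥ N, 1 / ((n : ℝ) + 1) < c := by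
  obtain ⟨N, hN⟩ := exists_nat_gt (1 / c)
  refine ⟨N, fun n hn => ?_⟩
  have hNn : ((N : ℝ)) ≤ n := Nat.cast_le.mpr hn
  have h1 : 1 / c < (n : ℝ) + 1 := by linarith
  have h2 : (0 : ℝ) < (n : ℝ) + 1 := by positivity
  rw [div_lt_iff₀ h2]
  have := mul_lt_mul_of_pos_left h1 hc
  rwa [mul_one_div_cancel hc.ne'] at this

private lemma hull_subset_add_ball {d k : ℕ} (u w : Fin k → EuclideanSpace ℝ (Fin d)) {η : ℝ}
    (h : ∀ j, ‖w j - u j‖ ≤ η) :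
    convexHull ℝ (Set.range w) ⊆
      convexHull ℝ (Set.range u) + Metric.closedBall (0 : EuclideanSpace ℝ (Fin d)) η := by
  apply convexHull_min
  · rintro x ⟨j, rfl⟩
    have hx : w j = u j + (w j - u j) := by abel
    rw [hx]
    exact Set.add_mem_add (subset_convexHull ℝ _ ⟨j, rfl⟩)
      (by simpa [mem_closedBall, dist_eq_norm] using h j)
  · exact (convex_convexHull ℝ _).add (convex_closedBall _ _)

/-- If `v_1, …, v_k` are distinct points of `ℝ^d` whose convex hull
`S` has nonempty interior and each `v_i` is an extreme point of `S`, then for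
every `Δ > 0` there is `δ > 0` such that whenever the convex hull `T` of points
`w_1, …, w_k` satisfies `λ(T Δ S) ≤ δ`, there is a permutation `ρ` with
`‖w_{ρ(i)} − v_i‖ ≤ Δ` for all `i`. -/
theorem stmt17 {d k : ℕ} (v : Fin k → EuclideanSpace ℝ (Fin d))
    (hinj : Function.Injective v)
    (hint : (interior (convexHull ℝ (Set.range v))).Nonempty)
    (hext : ∀ i, v i ∈ Set.extremePoints ℝ (convexHull ℝ (Set.range v))) :
    ∀ Δ : ℝ, 0 < Δ → ∃ δ : ℝ, 0 < δ ∧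
      ∀ w : Fin k → EuclideanSpace ℝ (Fin d),
        volume ((convexHull ℝ (Set.range w) \ convexHull ℝ (Set.range v)) ∪
            (convexHull ℝ (Set.range v) \ convexHull ℝ (Set.range w))) ≤
          ENNReal.ofReal δ →
        ∃ ρ : Equiv.Perm (Fin k), ∀ i, ‖w (ρ i) - v i‖ ≤ Δ := by
  intro Δ hΔ
  by_contra hcon
  push_neg at hcon
  set S := convexHull ℝ (Set.range v) with hS_def
  have hSconv : Convex ℝ S := convex_convexHull ℝ _
  have hScpt : IsCompact S := (Set.finite_range v).isCompact_convexHull ℝ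
  have hSclosed : IsClosed S := hScpt.isClosed
  -- `k` is nonzero
  have hknz : Nonempty (Fin k) := by
    rcases isEmpty_or_nonempty (Fin k) with hk | hk
    · exfalso
      obtain ⟨x, hx⟩ := hint
      have hxS : x ∈ S := interior_subset hx
      rw [hS_def, Set.range_eq_empty v, convexHull_empty] at hxS
      exact hxS
    · exact hk
  -- interior ball
  obtain ⟨x0, hx0⟩ := hint
  obtain ⟨r0, hr0pos, hball⟩ := Metric.isOpen_iff.mp isOpen_interior x0 hx0
  set B := Metric.ball x0 r0 with hB_def
  have hBS : B ⊆ S := fun x hx => interior_subset (hball hx)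
  set β : ℝ := (volume B).toReal with hβ_def
  have hBfin : volume B ≠ ⊤ := measure_ball_lt_top.ne
  have hβpos : 0 < β := ENNReal.toReal_pos (measure_ball_pos _ _ hr0pos).ne' hBfin
  have hBvol : volume B = ENNReal.ofReal β := (ENNReal.ofReal_toReal hBfin).symm
  -- bounding radius for S
  obtain ⟨R, hR⟩ := hScpt.isBounded.subset_closedBall x0
  set R1 : ℝ := max R r0 with hR1_def
  have hR1pos : 0 < R1 := lt_of_lt_of_le hr0pos (le_max_right _ _)
  have hSR1 : S ⊆ Metric.closedBall x0 R1 :=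
    hR.trans (Metric.closedBall_subset_closedBall (le_max_left _ _))
  -- the sequence of bad witnesses
  choose w hw1 hw2 using fun n : ℕ => hcon (1 / ((n : ℝ) + 1)) (by positivity)
  -- basic estimate on B \ T_n
  have hBdiff : ∀ n : ℕ, volume (B \ convexHull ℝ (Set.range (w n))) ≤
      ENNReal.ofReal (1 / ((n : ℝ) + 1)) := by
    intro n
    refine le_trans (measure_mono ?_) (hw1 n)
    intro x hx
    exact Or.inr ⟨hBS hx.1, hx.2⟩
  -- lower bound for the volume of B ∩ T_n
  have hK : ∀ n : ℕ, 1 / ((n : ℝ) + 1) ≤ β / 2 →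
      ENNReal.ofReal (β / 2) ≤ volume (B ∩ convexHull ℝ (Set.range (w n))) := by
    intro n hn
    have h1 : volume B ≤ volume (B ∩ convexHull ℝ (Set.range (w n))) +
        volume (B \ convexHull ℝ (Set.range (w n))) :=
      le_trans (measure_mono (fun x hx => by
        by_cases hxT : x ∈ convexHull ℝ (Set.range (w n))
        · exact Or.inl ⟨hx, hxT⟩
        · exact Or.inr ⟨hx, hxT⟩)) (measure_union_le _ _)
    have h2 : volume B ≤ volume (B ∩ convexHull ℝ (Set.range (w n))) + ENNReal.ofReal (β / 2) :=
      h1.trans (add_le_add_right ((hBdiff n).trans (ENNReal.ofReal_le_ofReal hn)) _)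
    have h3 : volume B - ENNReal.ofReal (β / 2) ≤
        volume (B ∩ convexHull ℝ (Set.range (w n))) := tsub_le_iff_right.mpr h2
    calc ENNReal.ofReal (β / 2) = ENNReal.ofReal (β - β / 2) := by
          rw [show β - β / 2 = β / 2 by ring]
      _ = ENNReal.ofReal β - ENNReal.ofReal (β / 2) := ENNReal.ofReal_sub _ (by positivity)
      _ = volume B - ENNReal.ofReal (β / 2) := by rw [hBvol]
      _ ≤ _ := h3
  -- cone estimate
  have cone : ∀ (n : ℕ) (p : EuclideanSpace ℝ (Fin d)) (τ : ℝ), 0 < τ → τ ≤ 1 →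
      p ∈ convexHull ℝ (Set.range (w n)) →
      (∀ x ∈ B ∩ convexHull ℝ (Set.range (w n)), AffineMap.homothety p τ x ∉ S) →
      ENNReal.ofReal (τ ^ d) * volume (B ∩ convexHull ℝ (Set.range (w n))) ≤
        ENNReal.ofReal (1 / ((n : ℝ) + 1)) := by
    intro n p τ hτ0 hτ1 hp hout
    have himg : AffineMap.homothety p τ '' (B ∩ convexHull ℝ (Set.range (w n))) ⊆
        convexHull ℝ (Set.range (w n)) \ S := by
      rintro y ⟨x, hx, rfl⟩
      constructor
      · have hmem : τ • x + (1 - τ) • p ∈ convexHull ℝ (Set.range (w n)) :=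
          (convex_convexHull ℝ _) hx.2 hp hτ0.le (by linarith) (by ring)
        have heq : AffineMap.homothety p τ x = τ • x + (1 - τ) • p := by
          simp only [AffineMap.homothety_apply, vsub_eq_sub, vadd_eq_add, smul_sub, sub_smul,
            one_smul]
          abel
        rw [heq]; exact hmem
      · exact hout x hx
    calc ENNReal.ofReal (τ ^ d) * volume (B ∩ convexHull ℝ (Set.range (w n)))
        = volume (AffineMap.homothety p τ '' (B ∩ convexHull ℝ (Set.range (w n)))) := by
          rw [Measure.addHaar_image_homothety, finrank_euclideanSpace_fin,
            abs_of_nonneg (by positivity)]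
      _ ≤ volume ((convexHull ℝ (Set.range (w n)) \ S) ∪
            (S \ convexHull ℝ (Set.range (w n)))) :=
          measure_mono (himg.trans Set.subset_union_left)
      _ ≤ ENNReal.ofReal (1 / ((n : ℝ) + 1)) := hw1 n
  -- Step 1: the vertices are eventually bounded
  obtain ⟨n₁, hn₁⟩ := small_inv_aux (min (β / 2) ((1 / 2) ^ d * (β / 2)))
    (lt_min (by positivity) (by positivity))
  have hBnd : ∀ n ≥ n₁, ∀ j, w n j ∈ Metric.closedBall x0 (3 * R1) := by
    intro n hn j
    rw [Metric.mem_closedBall, dist_eq_norm]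
    by_contra hfar
    push_neg at hfar
    set p := w n j with hp_def
    have hp : p ∈ convexHull ℝ (Set.range (w n)) := subset_convexHull ℝ _ ⟨j, rfl⟩
    have hout : ∀ x ∈ B ∩ convexHull ℝ (Set.range (w n)),
        AffineMap.homothety p (1 / 2 : ℝ) x ∉ S := by
      intro x hx hyS
      have hxb : ‖x - x0‖ < r0 := by
        have := hx.1; rwa [hB_def, Metric.mem_ball, dist_eq_norm] at this
      have hy : ‖AffineMap.homothety p (1 / 2 : ℝ) x - x0‖ ≤ R1 := by
        have := hSR1 hyS; rwa [Metric.mem_closedBall, dist_eq_norm] at this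
      have heq : AffineMap.homothety p (1 / 2 : ℝ) x - x0 =
          (1 / 2 : ℝ) • (x - x0) + (1 / 2 : ℝ) • (p - x0) := by
        simp only [AffineMap.homothety_apply, vsub_eq_sub, vadd_eq_add]
        module
      have h3 : ‖(1 / 2 : ℝ) • (p - x0)‖ ≤ ‖AffineMap.homothety p (1 / 2 : ℝ) x - x0‖ +
          ‖(1 / 2 : ℝ) • (x - x0)‖ := by
        have : (1 / 2 : ℝ) • (p - x0) =
            (AffineMap.homothety p (1 / 2 : ℝ) x - x0) - (1 / 2 : ℝ) • (x - x0) := by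
          rw [heq]; abel
        rw [this]
        exact norm_sub_le _ _
      rw [norm_smul, norm_smul, Real.norm_eq_abs] at h3
      have : |((1:ℝ) / 2)| = 1 / 2 := by norm_num
      rw [this] at h3
      have hr0R1 : r0 ≤ R1 := le_max_right _ _
      nlinarith [hfar, hxb, hy]
    have hcone := cone n p (1 / 2) (by norm_num) (by norm_num) hp hout
    have hδn := hn₁ n hn
    have hδ1 : 1 / ((n : ℝ) + 1) ≤ β / 2 := (lt_min_iff.mp hδn).1.le
    have hδ2 : 1 / ((n : ℝ) + 1) < (1 / 2) ^ d * (β / 2) := (lt_min_iff.mp hδn).2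
    have hvolK := hK n hδ1
    have : ENNReal.ofReal ((1 / 2 : ℝ) ^ d * (β / 2)) ≤ ENNReal.ofReal (1 / ((n : ℝ) + 1)) := by
      calc ENNReal.ofReal ((1 / 2 : ℝ) ^ d * (β / 2))
          = ENNReal.ofReal ((1 / 2 : ℝ) ^ d) * ENNReal.ofReal (β / 2) :=
            ENNReal.ofReal_mul (by positivity)
        _ ≤ ENNReal.ofReal ((1 / 2 : ℝ) ^ d) *
            volume (B ∩ convexHull ℝ (Set.range (w n))) := by
            exact mul_le_mul_right hvolK _
        _ ≤ ENNReal.ofReal (1 / ((n : ℝ) + 1)) := hcone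
    exact absurd this (not_le.mpr ((ENNReal.ofReal_lt_ofReal_iff (by positivity)).mpr hδ2))
  -- Step 2: extract a convergent subsequence
  have hQcpt : IsCompact (Set.univ.pi fun _ : Fin k =>
      Metric.closedBall x0 (3 * R1)) :=
    isCompact_univ_pi fun _ => isCompact_closedBall _ _
  have hmemQ : ∀ n : ℕ, (w (n + n₁)) ∈ (Set.univ.pi fun _ : Fin k =>
      Metric.closedBall x0 (3 * R1)) := by
    intro n j _
    exact hBnd (n + n₁) (Nat.le_add_left _ _) j
  obtain ⟨u, -, φ, hφ, hconv⟩ := hQcpt.tendsto_subseq hmemQ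
  set ψ : ℕ → ℕ := fun n => φ n + n₁ with hψ_def
  have hψge : ∀ n : ℕ, n ≤ ψ n := fun n => le_trans hφ.le_apply (Nat.le_add_right _ _)
  set T' := convexHull ℝ (Set.range u) with hT'_def
  have hT'cpt : IsCompact T' := (Set.finite_range u).isCompact_convexHull ℝ
  have hT'closed : IsClosed T' := hT'cpt.isClosed
  have hT'ne : T'.Nonempty := ⟨u hknz.some, subset_convexHull ℝ _ ⟨hknz.some, rfl⟩⟩
  -- combined selection lemma
  have hgood : ∀ η : ℝ, 0 < η → ∀ ε : ℝ, 0 < ε →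
      ∃ n : ℕ, (∀ j, ‖w (ψ n) j - u j‖ ≤ η) ∧ 1 / ((ψ n : ℝ) + 1) < ε := by
    intro η hη ε hε
    obtain ⟨N1, hN1⟩ := Metric.tendsto_atTop.mp hconv η hη
    obtain ⟨N2, hN2⟩ := small_inv_aux ε hε
    refine ⟨max N1 N2, fun j => ?_, ?_⟩
    · have hd := hN1 (max N1 N2) (le_max_left _ _)
      calc ‖w (ψ (max N1 N2)) j - u j‖ = dist (w (ψ (max N1 N2)) j) (u j) :=
            (dist_eq_norm _ _).symm
        _ ≤ dist (w (ψ (max N1 N2))) u := dist_le_pi_dist _ _ j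
        _ ≤ η := le_of_lt hd
    · have h1 : (max N1 N2 : ℕ) ≤ ψ (max N1 N2) := hψge _
      have h2 : N2 ≤ ψ (max N1 N2) := le_trans (le_max_right _ _) h1
      exact hN2 _ h2
  -- Step 3a: interior S ⊆ T'
  have hsub1 : interior S ⊆ T' := by
    intro x hx
    by_contra hxT
    have hεpos : 0 < infDist x T' := (hT'closed.notMem_iff_infDist_pos hT'ne).mp hxT
    obtain ⟨rx, hrxpos, hrx⟩ := Metric.isOpen_iff.mp isOpen_interior x hx
    set ε3 := min (infDist x T') rx with hε3_def
    have hε3pos : 0 < ε3 := lt_min hεpos hrxpos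
    have hballvol : 0 < volume (Metric.ball x (ε3 / 2)) :=
      measure_ball_pos _ _ (by positivity)
    have hballfin : volume (Metric.ball x (ε3 / 2)) ≠ ⊤ := measure_ball_lt_top.ne
    set γ : ℝ := (volume (Metric.ball x (ε3 / 2))).toReal with hγ_def
    have hγpos : 0 < γ := ENNReal.toReal_pos hballvol.ne' hballfin
    obtain ⟨n, hclose, hsmall⟩ := hgood (ε3 / 2) (by positivity) γ hγpos
    -- ball x (ε3/2) ⊆ S \ T_{ψ n}
    have hdisj : Metric.ball x (ε3 / 2) ⊆ S \ convexHull ℝ (Set.range (w (ψ n))) := by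
      intro y hy
      refine ⟨interior_subset (hrx (Metric.ball_subset_ball (by
        calc ε3 / 2 ≤ ε3 := by linarith
          _ ≤ rx := min_le_right _ _) hy)), ?_⟩
      intro hyT
      have hyT' := hull_subset_add_ball u (w (ψ n)) hclose hyT
      obtain ⟨t, ht, e, he, hte⟩ := hyT'
      have hne : ‖e‖ ≤ ε3 / 2 := by rwa [mem_closedBall, dist_zero_right] at he
      have hinf : infDist x T' ≤ dist x t := infDist_le_dist_of_mem ht
      have hdyx : dist x y < ε3 / 2 := by rw [dist_comm]; rwa [Metric.mem_ball] at hy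
      have h4 : dist x t ≤ dist x y + dist y t := dist_triangle _ _ _
      have h5 : dist y t = ‖e‖ := by
        rw [← hte, dist_eq_norm]; simp
      have h6 : ε3 ≤ infDist x T' := min_le_left _ _
      linarith [h4, hinf, h5, hne, hdyx, h6]
    have : volume (Metric.ball x (ε3 / 2)) ≤ ENNReal.ofReal (1 / ((ψ n : ℝ) + 1)) := by
      refine le_trans (measure_mono ?_) (hw1 (ψ n))
      exact fun y hy => Or.inr (hdisj hy)
    have hlt : ENNReal.ofReal (1 / ((ψ n : ℝ) + 1)) < volume (Metric.ball x (ε3 / 2)) := by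
      rw [← ENNReal.ofReal_toReal hballfin]
      exact (ENNReal.ofReal_lt_ofReal_iff hγpos).mpr hsmall
    exact absurd this (not_le.mpr hlt)
  -- S ⊆ T'
  have hST' : S ⊆ T' := by
    intro x hx
    have hcl : x ∈ closure (interior S) := by
      have hseq : Filter.Tendsto (fun m : ℕ => x + (1 / ((m : ℝ) + 1)) • (x0 - x))
          Filter.atTop (nhds x) := by
        have h0 : Filter.Tendsto (fun m : ℕ => (1 / ((m : ℝ) + 1))) Filter.atTop (nhds 0) :=
          tendsto_one_div_add_atTop_nhds_zero_nat
        have := (h0.smul_const (x0 - x)).const_add x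
        simpa using this
      refine mem_closure_of_tendsto hseq (Filter.Eventually.of_forall fun m => ?_)
      exact hSconv.add_smul_sub_mem_interior hx hx0
        ⟨by positivity, by
          rw [div_le_one (by positivity)]; linarith [Nat.cast_nonneg (α := ℝ) m]⟩
    have := closure_mono hsub1 hcl
    rwa [hT'closed.closure_eq] at this
  -- Step 3b: every u j lies in S
  have huS : ∀ j, u j ∈ S := by
    intro j
    by_contra hjS
    have hSne : S.Nonempty := ⟨x0, interior_subset hx0⟩
    have hεpos : 0 < infDist (u j) S := (hSclosed.notMem_iff_infDist_pos hSne).mp hjS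
    set ε := infDist (u j) S with hε_def
    set D : ℝ := ‖u j - x0‖ + r0 + ε with hD_def
    have hDpos : 0 < D := by positivity
    set τ : ℝ := min 1 (ε / (2 * D)) with hτ_def
    have hτpos : 0 < τ := lt_min one_pos (by positivity)
    have hτle1 : τ ≤ 1 := min_le_left _ _
    obtain ⟨n, hclose, hsmall⟩ := hgood (ε / 4) (by positivity)
      (min (β / 2) (τ ^ d * (β / 2))) (lt_min (by positivity) (by positivity))
    set p := w (ψ n) j with hp_def
    have hp : p ∈ convexHull ℝ (Set.range (w (ψ n))) := subset_convexHull ℝ _ ⟨j, rfl⟩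
    have hpu : ‖p - u j‖ ≤ ε / 4 := by
      have := hclose j
      rwa [hp_def]
    have hout : ∀ x ∈ B ∩ convexHull ℝ (Set.range (w (ψ n))),
        AffineMap.homothety p τ x ∉ S := by
      intro x hx hyS
      have hxb : ‖x - x0‖ < r0 := by
        have := hx.1; rwa [hB_def, Metric.mem_ball, dist_eq_norm] at this
      -- ‖x - p‖ ≤ D
      have hxp : ‖x - p‖ ≤ D := by
        have h1 : ‖x - p‖ ≤ ‖x - x0‖ + ‖x0 - u j‖ + ‖u j - p‖ := by
          calc ‖x - p‖ = ‖(x - x0) + (x0 - u j) + (u j - p)‖ := by abel_nf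
            _ ≤ ‖(x - x0) + (x0 - u j)‖ + ‖u j - p‖ := norm_add_le _ _
            _ ≤ ‖x - x0‖ + ‖x0 - u j‖ + ‖u j - p‖ := by
                exact add_le_add_left (norm_add_le _ _) _
        have h2 : ‖x0 - u j‖ = ‖u j - x0‖ := norm_sub_rev _ _
        have h3 : ‖u j - p‖ = ‖p - u j‖ := norm_sub_rev _ _
        rw [h2, h3] at h1
        have : ε / 4 ≤ ε := by linarith
        linarith [hpu]
      -- the homothety image is within 3ε/4 of u j
      have hyp : ‖AffineMap.homothety p τ x - p‖ ≤ ε / 2 := by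
        have heq : AffineMap.homothety p τ x - p = τ • (x - p) := by
          simp [AffineMap.homothety_apply, vsub_eq_sub, vadd_eq_add]
        rw [heq, norm_smul, Real.norm_eq_abs, abs_of_pos hτpos]
        calc τ * ‖x - p‖ ≤ (ε / (2 * D)) * D :=
            mul_le_mul (min_le_right _ _) hxp (norm_nonneg _) (by positivity)
          _ = ε / 2 := by field_simp
      have hyu : ‖AffineMap.homothety p τ x - u j‖ ≤ 3 * ε / 4 := by
        calc ‖AffineMap.homothety p τ x - u j‖
            ≤ ‖AffineMap.homothety p τ x - p‖ + ‖p - u j‖ := by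
              have : AffineMap.homothety p τ x - u j =
                  (AffineMap.homothety p τ x - p) + (p - u j) := by abel
              rw [this]; exact norm_add_le _ _
          _ ≤ ε / 2 + ε / 4 := add_le_add hyp hpu
          _ = 3 * ε / 4 := by ring
      have hinf : ε ≤ dist (u j) (AffineMap.homothety p τ x) := infDist_le_dist_of_mem hyS
      rw [dist_eq_norm, norm_sub_rev] at hinf
      linarith
    have hcone := cone (ψ n) p τ hτpos hτle1 hp hout
    have hδ1 : 1 / ((ψ n : ℝ) + 1) ≤ β / 2 := ((lt_min_iff.mp hsmall).1).le
    have hδ2 : 1 / ((ψ n : ℝ) + 1) < τ ^ d * (β / 2) := (lt_min_iff.mp hsmall).2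
    have hvolK := hK (ψ n) hδ1
    have : ENNReal.ofReal (τ ^ d * (β / 2)) ≤ ENNReal.ofReal (1 / ((ψ n : ℝ) + 1)) := by
      calc ENNReal.ofReal (τ ^ d * (β / 2))
          = ENNReal.ofReal (τ ^ d) * ENNReal.ofReal (β / 2) :=
            ENNReal.ofReal_mul (by positivity)
        _ ≤ ENNReal.ofReal (τ ^ d) * volume (B ∩ convexHull ℝ (Set.range (w (ψ n)))) :=
            mul_le_mul_right hvolK _
        _ ≤ ENNReal.ofReal (1 / ((ψ n : ℝ) + 1)) := hcone
    exact absurd this (not_le.mpr ((ENNReal.ofReal_lt_ofReal_iff (by positivity)).mpr hδ2))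
  have hT'S : T' ⊆ S := convexHull_min (fun x ⟨j, hj⟩ => hj ▸ huS j) hSconv
  have hST'eq : S = T' := le_antisymm hST' hT'S
  -- Step 4: build the permutation
  have hvu : ∀ i, v i ∈ Set.range u := by
    intro i
    have h1 : v i ∈ (convexHull ℝ (Set.range u)).extremePoints ℝ := by
      rw [← hT'_def, ← hST'eq]
      exact hext i
    exact extremePoints_convexHull_subset h1
  choose σ hσ using hvu
  have hσinj : Function.Injective σ := by
    intro i i' h
    apply hinj
    rw [← hσ i, ← hσ i', h]
  have hσbij : Function.Bijective σ := (Finite.injective_iff_bijective).mp hσinj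
  set ρ : Equiv.Perm (Fin k) := Equiv.ofBijective σ hσbij with hρ_def
  obtain ⟨n, hclose, -⟩ := hgood Δ hΔ 1 one_pos
  obtain ⟨i, hi⟩ := hw2 (ψ n) ρ
  have : ‖w (ψ n) (ρ i) - v i‖ ≤ Δ := by
    have hρi : ρ i = σ i := rfl
    rw [hρi, ← hσ i]
    exact hclose (σ i)
  linarith
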